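/- Let π > 0, let j(x) = x √(4x + π² x⁴) − π x³ for x > 0 (so that j(x) > 0 for x > 0), and define ρ_π : (0, ∞) → ℝ by ρ_π(x) = 4/√(j(x)) + π √(j(x)). Then ρ_π is strictly decreasing on (0, ∞), ρ_π(x) > 3√(2π) for every x > 0, and ρ_π(x) → 3√(2π) as x → ∞. -/

import Mathlib

noncomputable section

/-- The function `j(x) = x√(4x + π²x⁴) − πx³`. -/
def jfun (π x : ℝ) : ℝ := x * Real.sqrt (4 * x + π ^ 2 * x ^ 4) - π * x ^ 3

/-- The profile `ρ_π(x) = 4/√(j(x)) + π√(j(x))`. -/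
def rhofun (π x : ℝ) : ℝ :=
  4 / Real.sqrt (jfun π x) + π * Real.sqrt (jfun π x)

lemma jeq (π : ℝ) (hπ : 0 < π) (x : ℝ) (hx : 0 < x) :
    jfun π x = 4 / (Real.sqrt (4 / x ^ 3 + π ^ 2) + π) := by
  have hu : (0:ℝ) ≤ 4 / x ^ 3 + π ^ 2 := by positivity
  have hx4 : (4:ℝ) * x + π ^ 2 * x ^ 4 = x ^ 4 * (4 / x ^ 3 + π ^ 2) := by
    field_simp
  have hs4 : Real.sqrt (x ^ 4) = x ^ 2 := by
    rw [show x ^ 4 = (x ^ 2) ^ 2 by ring, Real.sqrt_sq (by positivity)]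
  have hd : 0 < Real.sqrt (4 / x ^ 3 + π ^ 2) + π := by
    have := Real.sqrt_nonneg (4 / x ^ 3 + π ^ 2); linarith
  have hs : Real.sqrt (4 / x ^ 3 + π ^ 2) * Real.sqrt (4 / x ^ 3 + π ^ 2)
      = 4 / x ^ 3 + π ^ 2 := Real.mul_self_sqrt hu
  have hs' : x ^ 3 * (Real.sqrt (4 / x ^ 3 + π ^ 2) * Real.sqrt (4 / x ^ 3 + π ^ 2))
      = 4 + π ^ 2 * x ^ 3 := by
    rw [hs]; field_simp
  unfold jfun
  rw [hx4, Real.sqrt_mul (by positivity), hs4, eq_div_iff hd.ne']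
  linear_combination hs'

lemma jpos (π : ℝ) (hπ : 0 < π) (x : ℝ) (hx : 0 < x) : 0 < jfun π x := by
  rw [jeq π hπ x hx]
  apply div_pos (by norm_num)
  have := Real.sqrt_nonneg (4 / x ^ 3 + π ^ 2); linarith

lemma jlt (π : ℝ) (hπ : 0 < π) (x : ℝ) (hx : 0 < x) : jfun π x < 2 / π := by
  rw [jeq π hπ x hx]
  have hlt : π < Real.sqrt (4 / x ^ 3 + π ^ 2) := by
    have : Real.sqrt (π ^ 2) < Real.sqrt (4 / x ^ 3 + π ^ 2) := by
      apply Real.sqrt_lt_sqrt (by positivity)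
      have : (0:ℝ) < 4 / x ^ 3 := by positivity
      linarith
    rwa [Real.sqrt_sq hπ.le] at this
  calc 4 / (Real.sqrt (4 / x ^ 3 + π ^ 2) + π) < 4 / (π + π) := by
        apply div_lt_div_of_pos_left (by norm_num) (by linarith) (by linarith)
    _ = 2 / π := by field_simp; ring

lemma jmono (π : ℝ) (hπ : 0 < π) : StrictMonoOn (jfun π) (Set.Ioi 0) := by
  intro x hx y hy hxy
  simp only [Set.mem_Ioi] at hx hy
  rw [jeq π hπ x hx, jeq π hπ y hy]
  have h1 : 4 / y ^ 3 < 4 / x ^ 3 := by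
    apply div_lt_div_of_pos_left (by norm_num) (by positivity)
    exact pow_lt_pow_left₀ hxy hx.le (by norm_num)
  have h2 : Real.sqrt (4 / y ^ 3 + π ^ 2) < Real.sqrt (4 / x ^ 3 + π ^ 2) := by
    apply Real.sqrt_lt_sqrt (by positivity); linarith
  have h3 : 0 < Real.sqrt (4 / y ^ 3 + π ^ 2) + π := by
    have := Real.sqrt_nonneg (4 / y ^ 3 + π ^ 2); linarith
  apply div_lt_div_of_pos_left (by norm_num) h3 (by linarith)

/-- The value `4/√(2/π) + π√(2/π) = 3√(2π)`. -/
lemma fval (π : ℝ) (hπ : 0 < π) :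
    4 / Real.sqrt (2 / π) + π * Real.sqrt (2 / π) = 3 * Real.sqrt (2 * π) := by
  have h1 : Real.sqrt (2 / π) = Real.sqrt (2 * π) / π := by
    rw [show (2:ℝ) / π = 2 * π / π ^ 2 by field_simp,
      Real.sqrt_div (by positivity), Real.sqrt_sq hπ.le]
  have hs : 0 < Real.sqrt (2 * π) := Real.sqrt_pos.2 (by positivity)
  have hsq : Real.sqrt (2 * π) * Real.sqrt (2 * π) = 2 * π :=
    Real.mul_self_sqrt (by positivity)
  have h2 : 4 / (Real.sqrt (2 * π) / π) = 2 * Real.sqrt (2 * π) := by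
    rw [div_div_eq_mul_div, div_eq_iff hs.ne']
    linear_combination -2 * hsq
  have h3 : π * (Real.sqrt (2 * π) / π) = Real.sqrt (2 * π) := by
    rw [mul_comm, div_mul_eq_mul_div, mul_div_assoc, div_self hπ.ne', mul_one]
  rw [h1, h2, h3]; ring

/-- `f(t) = 4/t + πt` is strictly decreasing while `ab < 4/π`. -/
lemma fanti (π : ℝ) (hπ : 0 < π) (a b : ℝ) (ha : 0 < a) (hab : a < b)
    (hprod : a * b < 4 / π) : 4 / b + π * b < 4 / a + π * a := by
  have hb : 0 < b := ha.trans hab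
  have key : 4 / a + π * a - (4 / b + π * b) = (b - a) * (4 - π * (a * b)) / (a * b) := by
    field_simp; ring
  have h4 : π * (a * b) < 4 := by
    calc π * (a * b) < π * (4 / π) := by
          apply mul_lt_mul_of_pos_left hprod hπ
      _ = 4 := by field_simp
  have : 0 < (b - a) * (4 - π * (a * b)) / (a * b) := by
    apply div_pos (mul_pos (by linarith) (by linarith)) (by positivity)
  linarith

lemma sqrtj_lt (π : ℝ) (hπ : 0 < π) (x : ℝ) (hx : 0 < x) :
    Real.sqrt (jfun π x) < Real.sqrt (2 / π) :=
  Real.sqrt_lt_sqrt (jpos π hπ x hx).le (jlt π hπ x hx)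

lemma sq2pi (π : ℝ) (hπ : 0 < π) :
    Real.sqrt (2 / π) * Real.sqrt (2 / π) = 2 / π :=
  Real.mul_self_sqrt (by positivity)

/-- For `π > 0`: `j > 0` on `(0,∞)`, `ρ_π` is strictly decreasing on `(0,∞)`, strictly larger
than `3√(2π)` there, and tends to `3√(2π)` at infinity. -/
theorem stmt13 (π : ℝ) (hπ : 0 < π) :
    (∀ x : ℝ, 0 < x → 0 < jfun π x) ∧
    StrictAntiOn (rhofun π) (Set.Ioi 0) ∧
    (∀ x : ℝ, 0 < x → 3 * Real.sqrt (2 * π) < rhofun π x) ∧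
    Filter.Tendsto (rhofun π) Filter.atTop (nhds (3 * Real.sqrt (2 * π))) := by
  have h24 : 2 / π < 4 / π := by gcongr; norm_num
  refine ⟨jpos π hπ, ?_, ?_, ?_⟩
  · -- strictly decreasing
    intro x hx y hy hxy
    simp only [Set.mem_Ioi] at hx hy
    have ha : 0 < Real.sqrt (jfun π x) := Real.sqrt_pos.2 (jpos π hπ x hx)
    have hab : Real.sqrt (jfun π x) < Real.sqrt (jfun π y) :=
      Real.sqrt_lt_sqrt (jpos π hπ x hx).le (jmono π hπ hx hy hxy)
    have hprod : Real.sqrt (jfun π x) * Real.sqrt (jfun π y) < 4 / π := by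
      calc Real.sqrt (jfun π x) * Real.sqrt (jfun π y)
          < Real.sqrt (2 / π) * Real.sqrt (2 / π) := by
            apply mul_lt_mul (sqrtj_lt π hπ x hx) (sqrtj_lt π hπ y hy).le
              (Real.sqrt_pos.2 (jpos π hπ y hy)) (Real.sqrt_nonneg _)
        _ = 2 / π := sq2pi π hπ
        _ < 4 / π := h24
    exact fanti π hπ _ _ ha hab hprod
  · -- lower bound
    intro x hx
    have ha : 0 < Real.sqrt (jfun π x) := Real.sqrt_pos.2 (jpos π hπ x hx)
    have hprod : Real.sqrt (jfun π x) * Real.sqrt (2 / π) < 4 / π := by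
      calc Real.sqrt (jfun π x) * Real.sqrt (2 / π)
          < Real.sqrt (2 / π) * Real.sqrt (2 / π) := by
            apply mul_lt_mul_of_pos_right (sqrtj_lt π hπ x hx) (Real.sqrt_pos.2 (by positivity))
        _ = 2 / π := sq2pi π hπ
        _ < 4 / π := h24
    have := fanti π hπ _ _ ha (sqrtj_lt π hπ x hx) hprod
    rwa [fval π hπ] at this
  · -- limit
    have h0 : Filter.Tendsto (fun x : ℝ => 4 / x ^ 3) Filter.atTop (nhds 0) :=
      tendsto_const_nhds.div_atTop (Filter.tendsto_pow_atTop (by norm_num))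
    have h2 : Filter.Tendsto (fun x : ℝ => Real.sqrt (4 / x ^ 3 + π ^ 2) + π)
        Filter.atTop (nhds (2 * π)) := by
      have := ((h0.add (tendsto_const_nhds (x := π ^ 2))).sqrt).add
        (tendsto_const_nhds (x := π))
      simpa [Real.sqrt_sq hπ.le, two_mul] using this
    have hj : Filter.Tendsto (jfun π) Filter.atTop (nhds (2 / π)) := by
      have h1 := tendsto_const_nhds (x := (4:ℝ)).div h2 (by positivity : (2 * π) ≠ 0)
      have h4 : (4:ℝ) / (2 * π) = 2 / π := by field_simp; ring
      rw [h4] at h1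
      exact h1.congr' (((Filter.eventually_gt_atTop 0).mono
        fun x hx => (jeq π hπ x hx).symm))
    have hsj : Filter.Tendsto (fun x => Real.sqrt (jfun π x)) Filter.atTop
        (nhds (Real.sqrt (2 / π))) := hj.sqrt
    have hne : Real.sqrt (2 / π) ≠ 0 := ne_of_gt (Real.sqrt_pos.2 (by positivity))
    have hfin := (tendsto_const_nhds (x := (4:ℝ)).div hsj hne).add
      (tendsto_const_nhds (x := π).mul hsj)
    rw [fval π hπ] at hfin
    exact hfin
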